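/- Let n ≥ 4, s ∈ (0,1), p ∈ [1, 2*−1), λ > 0, and let h : ℝⁿ → ℝ be a positive bounded continuous function. Let u ∈ C²(ℝⁿ) ∩ L^∞(ℝⁿ) be a nonnegative classical solution of −Δu(x) + (−Δ)^s u(x) = λ h(x) u(x)^p + u(x)^{2*−1} for all x ∈ ℝⁿ, with u not identically zero. Then u(x) > 0 for every x ∈ ℝⁿ. -/

import Mathlib

open MeasureTheory Metric Set
open scoped RealInnerProductSpace
noncomputable section

/-- The Laplacian `Δu(x) = ∑ᵢ ∂²u/∂xᵢ²(x)`. -/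
def lap (n : ℕ) (u : EuclideanSpace ℝ (Fin n) → ℝ) (x : EuclideanSpace ℝ (Fin n)) : ℝ :=
  ∑ i : Fin n,
    iteratedFDeriv ℝ 2 u x ![EuclideanSpace.single i 1, EuclideanSpace.single i 1]

/-- The standard normalization constant `c_{n,s}` of the fractional Laplacian. -/
def fracLapConst (n : ℕ) (s : ℝ) : ℝ :=
  (2 : ℝ) ^ (2 * s) * s * Real.Gamma ((n : ℝ) / 2 + s)
    / (Real.pi ^ ((n : ℝ) / 2) * Real.Gamma (1 - s))

/-- The fractional Laplacian
`(-Δ)^s u(x) = (c_{n,s}/2) ∫ (2u(x) - u(x+z) - u(x-z))/|z|^{n+2s} dz`. -/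
def fracLap (n : ℕ) (s : ℝ) (u : EuclideanSpace ℝ (Fin n) → ℝ)
    (x : EuclideanSpace ℝ (Fin n)) : ℝ :=
  (fracLapConst n s / 2) *
    ∫ z : EuclideanSpace ℝ (Fin n),
      (2 * u x - u (x + z) - u (x - z)) / ‖z‖ ^ ((n : ℝ) + 2 * s)

/-- The critical Sobolev exponent `2* = 2n/(n-2)`. -/
def critExp (n : ℕ) : ℝ := 2 * (n : ℝ) / ((n : ℝ) - 2)

section Helpers
open Module
open scoped ENNReal

variable {E : Type*} [NormedAddCommGroup E] [NormedSpace ℝ E] [FiniteDimensional ℝ E]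
  [MeasurableSpace E] [BorelSpace E] {μ : Measure E} [μ.IsAddHaarMeasure]

theorem my_integrableOn_norm_rpow_ball {r : ℝ} (hr0 : 0 < r) (hrn : r < finrank ℝ E) :
    IntegrableOn (fun x : E => ‖x‖ ^ (-r)) (ball (0:E) 1) μ := by
  have hmeas : Measurable fun x : E => ‖x‖ ^ (-r) := measurable_norm.pow_const _
  constructor
  · exact (hmeas.aestronglyMeasurable)
  · have hnn : ∀ x : E, 0 ≤ ‖x‖ ^ (-r) := fun x => Real.rpow_nonneg (norm_nonneg x) _
    rw [hasFiniteIntegral_iff_ofReal (Filter.Eventually.of_forall hnn)]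
    rw [lintegral_eq_lintegral_meas_le _ (Filter.Eventually.of_forall hnn)
      hmeas.aemeasurable]
    set ν := μ.restrict (ball (0:E) 1)
    have key : ∀ t : ℝ, 0 < t →
        ν {a : E | t ≤ ‖a‖ ^ (-r)} ≤ μ (closedBall (0:E) (t ^ (-r⁻¹))) := by
      intro t ht
      refine le_trans (Measure.restrict_le_self _) (measure_mono ?_)
      intro x hx
      simp only [mem_setOf_eq] at hx
      simp only [mem_closedBall_zero_iff]
      rcases eq_or_lt_of_le (norm_nonneg x) with h0 | h0
      · rw [← h0]; positivity
      · have h1 : (‖x‖ ^ (-r)) ^ (-r⁻¹) ≤ t ^ (-r⁻¹) :=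
          Real.rpow_le_rpow_of_nonpos ht hx (by simp only [Left.neg_nonpos_iff]; positivity)
        rwa [← Real.rpow_mul (norm_nonneg x), neg_mul_neg,
          mul_inv_cancel₀ hr0.ne', Real.rpow_one] at h1
    calc ∫⁻ t in Ioi (0:ℝ), ν {a : E | t ≤ ‖a‖ ^ (-r)}
        ≤ ∫⁻ t in Ioc (0:ℝ) 1 ∪ Ioi 1, ν {a : E | t ≤ ‖a‖ ^ (-r)} :=
          lintegral_mono_set Ioi_subset_Ioc_union_Ioi
      _ ≤ (∫⁻ t in Ioc (0:ℝ) 1, ν {a : E | t ≤ ‖a‖ ^ (-r)})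
            + ∫⁻ t in Ioi (1:ℝ), ν {a : E | t ≤ ‖a‖ ^ (-r)} := lintegral_union_le _ _ _
      _ < ∞ := by
          refine ENNReal.add_lt_top.2 ⟨?_, ?_⟩
          · calc ∫⁻ t in Ioc (0:ℝ) 1, ν {a : E | t ≤ ‖a‖ ^ (-r)}
                ≤ ∫⁻ _ in Ioc (0:ℝ) 1, μ (ball (0:E) 1) := by
                  refine lintegral_mono fun t => ?_
                  calc ν {a : E | t ≤ ‖a‖ ^ (-r)} ≤ ν univ := measure_mono (subset_univ _)
                    _ = μ (ball (0:E) 1) := Measure.restrict_apply_univ _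
              _ < ∞ := by
                  rw [lintegral_const]
                  exact ENNReal.mul_lt_top measure_ball_lt_top (by simp [Real.volume_Ioc])
          · calc ∫⁻ t in Ioi (1:ℝ), ν {a : E | t ≤ ‖a‖ ^ (-r)}
                ≤ ∫⁻ t in Ioi (1:ℝ),
                    ENNReal.ofReal (t ^ (-((finrank ℝ E : ℝ)/r))) * μ (ball (0:E) 1) := by
                  refine setLIntegral_mono' measurableSet_Ioi fun t ht => ?_
                  have ht1 : (1:ℝ) < t := ht
                  refine (key t (by linarith)).trans ?_
                  rw [μ.addHaar_closedBall _ (by positivity)]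
                  gcongr
                  rw [← Real.rpow_natCast (t ^ (-r⁻¹)), ← Real.rpow_mul (by positivity)]
                  apply le_of_eq
                  congr 1
                  field_simp
              _ < ∞ := by
                  rw [lintegral_mul_const' _ _ measure_ball_lt_top.ne]
                  refine ENNReal.mul_lt_top ?_ measure_ball_lt_top
                  refine IntegrableOn.setLIntegral_lt_top ?_
                  refine integrableOn_Ioi_rpow_of_lt ?_ one_pos
                  rw [neg_lt_neg_iff, lt_div_iff₀ hr0, one_mul]
                  exact hrn

theorem my_secondDeriv_nonneg {g : ℝ → ℝ} (hg : ContDiff ℝ 2 g) (hmin : IsLocalMin g 0) :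
    0 ≤ deriv (deriv g) 0 := by
  by_contra hneg
  push_neg at hneg
  have hg' : ContDiff ℝ 1 (deriv g) := by
    have := contDiff_succ_iff_deriv.mp (show ContDiff ℝ (1 + 1) g by exact_mod_cast hg)
    exact this.2.2
  have hdg : Differentiable ℝ g := hg.differentiable two_ne_zero
  have hdg' : Differentiable ℝ (deriv g) := hg'.differentiable one_ne_zero
  have hcont : Continuous (deriv (deriv g)) := (contDiff_one_iff_deriv.mp hg').2
  have hU : IsOpen {t : ℝ | deriv (deriv g) t < 0} :=
    isOpen_lt hcont continuous_const
  obtain ⟨δ, hδ, hball⟩ := Metric.isOpen_iff.mp hU 0 hneg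
  obtain ⟨ε, hε, hmin'⟩ := Metric.mem_nhds_iff.mp hmin
  set a := min (δ / 2) (ε / 2) with ha
  have ha0 : 0 < a := by positivity
  have hIcc : Icc (0 : ℝ) a ⊆ Metric.ball (0 : ℝ) δ := by
    intro t ht
    rw [Metric.mem_ball, Real.dist_eq, sub_zero, abs_of_nonneg ht.1]
    have := ht.2
    have : a ≤ δ / 2 := min_le_left _ _
    linarith [ht.2]
  have hanti' : StrictAntiOn (deriv g) (Icc 0 a) := by
    refine strictAntiOn_of_deriv_neg (convex_Icc _ _) (hdg'.continuous.continuousOn) ?_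
    intro t ht
    rw [interior_Icc] at ht
    exact hball (hIcc ⟨ht.1.le, ht.2.le⟩)
  have hd0 : deriv g 0 = 0 := hmin.deriv_eq_zero
  have hanti : StrictAntiOn g (Icc 0 a) := by
    refine strictAntiOn_of_deriv_neg (convex_Icc _ _) (hdg.continuous.continuousOn) ?_
    intro t ht
    rw [interior_Icc] at ht
    have := hanti' (left_mem_Icc.mpr ha0.le) ⟨ht.1.le, ht.2.le⟩ ht.1
    rwa [hd0] at this
  have hlt : g a < g 0 := hanti (left_mem_Icc.mpr ha0.le) (right_mem_Icc.mpr ha0.le) ha0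
  have hmem : a ∈ Metric.ball (0 : ℝ) ε := by
    rw [Metric.mem_ball, Real.dist_eq, sub_zero, abs_of_nonneg ha0.le]
    have : a ≤ ε / 2 := min_le_right _ _
    linarith
  exact absurd (hmin' hmem) (not_le.mpr hlt)

section Line
variable {u : E → ℝ}

theorem my_hasDerivAt_line (hu : ContDiff ℝ 2 u) (x₀ v : E) (t : ℝ) :
    HasDerivAt (fun t : ℝ => u (x₀ + t • v)) ((fderiv ℝ u (x₀ + t • v)) v) t := by
  have hl : HasDerivAt (fun t : ℝ => x₀ + t • v) v t := by
    simpa using ((hasDerivAt_id t).smul_const v).const_add x₀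
  have hf : HasFDerivAt u (fderiv ℝ u (x₀ + t • v)) (x₀ + t • v) :=
    (hu.differentiable two_ne_zero (x₀ + t • v)).hasFDerivAt
  simpa [Function.comp_def] using hf.comp_hasDerivAt t hl

theorem my_hasDerivAt_line' (hu : ContDiff ℝ 2 u) (x₀ v : E) (t : ℝ) :
    HasDerivAt (fun t : ℝ => (fderiv ℝ u (x₀ + t • v)) v)
      ((fderiv ℝ (fderiv ℝ u) (x₀ + t • v)) v v) t := by
  have hl : HasDerivAt (fun t : ℝ => x₀ + t • v) v t := by
    simpa using ((hasDerivAt_id t).smul_const v).const_add x₀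
  have hu' : Differentiable ℝ (fderiv ℝ u) :=
    (hu.fderiv_right (m := 1) (by norm_num)).differentiable one_ne_zero
  have hf : HasFDerivAt (fderiv ℝ u) (fderiv ℝ (fderiv ℝ u) (x₀ + t • v)) (x₀ + t • v) :=
    (hu' _).hasFDerivAt
  have h1 : HasDerivAt (fun t : ℝ => fderiv ℝ u (x₀ + t • v))
      (fderiv ℝ (fderiv ℝ u) (x₀ + t • v) v) t := hf.comp_hasDerivAt t hl
  have h2 := ((ContinuousLinearMap.apply ℝ ℝ v).hasFDerivAt.comp_hasDerivAt t h1)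
  simpa [Function.comp_def] using h2

theorem my_deriv_line (hu : ContDiff ℝ 2 u) (x₀ v : E) :
    deriv (deriv (fun t : ℝ => u (x₀ + t • v))) 0 = fderiv ℝ (fderiv ℝ u) x₀ v v := by
  have hd : deriv (fun t : ℝ => u (x₀ + t • v)) = fun t => (fderiv ℝ u (x₀ + t • v)) v := by
    funext t; exact (my_hasDerivAt_line hu x₀ v t).deriv
  rw [hd]
  have := (my_hasDerivAt_line' hu x₀ v 0).deriv
  simpa using this

theorem my_contDiff_line (hu : ContDiff ℝ 2 u) (x₀ v : E) :
    ContDiff ℝ 2 (fun t : ℝ => u (x₀ + t • v)) := by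
  have : ContDiff ℝ 2 (fun t : ℝ => x₀ + t • v) := by
    apply ContDiff.add contDiff_const
    exact (contDiff_id.smul contDiff_const)
  exact hu.comp this

end Line

set_option linter.unusedSectionVars false

theorem my_quad_bound {u : E → ℝ} (hu : ContDiff ℝ 2 u) (x₀ : E) (hval : u x₀ = 0)
    (hnn : ∀ y, 0 ≤ u y) :
    ∃ C : ℝ, 0 ≤ C ∧ ∀ z : E, ‖z‖ ≤ 1 → u (x₀ + z) ≤ C * ‖z‖ ^ 2 := by
  have hlocal : IsLocalMin u x₀ :=
    Filter.Eventually.of_forall (fun y => hval ▸ hnn y)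
  have hf0 : fderiv ℝ u x₀ = 0 := hlocal.fderiv_eq_zero
  set D2 := fderiv ℝ (fderiv ℝ u) with hD2
  have hD2c : Continuous D2 :=
    (hu.fderiv_right (m := 1) (by norm_num)).continuous_fderiv one_ne_zero
  obtain ⟨y₀, -, hy₀⟩ := (isCompact_closedBall x₀ 1).exists_isMaxOn
    ⟨x₀, mem_closedBall_self zero_le_one⟩ ((Continuous.norm (E := E →L[ℝ] E →L[ℝ] ℝ) hD2c).continuousOn)
  refine ⟨‖D2 y₀‖, norm_nonneg (E := E →L[ℝ] E →L[ℝ] ℝ) _, fun z hz => ?_⟩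
  set g : ℝ → ℝ := fun t => u (x₀ + t • z) with hg
  have hgC : ContDiff ℝ 2 g := my_contDiff_line hu x₀ z
  have hg0 : g 0 = 0 := by simp [hg, hval]
  have hg1 : g 1 = u (x₀ + z) := by simp [hg]
  have hd1 : ∀ t : ℝ, HasDerivAt g ((fderiv ℝ u (x₀ + t • z)) z) t :=
    my_hasDerivAt_line hu x₀ z
  have hd2 : ∀ t : ℝ, HasDerivAt (fun t : ℝ => (fderiv ℝ u (x₀ + t • z)) z)
      ((D2 (x₀ + t • z)) z z) t := my_hasDerivAt_line' hu x₀ z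
  obtain ⟨ξ, hξ, hξ'⟩ := exists_hasDerivAt_eq_slope g
    (fun t => (fderiv ℝ u (x₀ + t • z)) z) one_pos
    (hgC.continuous.continuousOn) (fun t _ => hd1 t)
  obtain ⟨η, hη, hη'⟩ := exists_hasDerivAt_eq_slope
    (fun t => (fderiv ℝ u (x₀ + t • z)) z)
    (fun t => (D2 (x₀ + t • z)) z z) hξ.1
    (fun t _ => (hd2 t).continuousAt.continuousWithinAt)
    (fun t _ => hd2 t)
  have hg'0 : (fderiv ℝ u (x₀ + (0:ℝ) • z)) z = 0 := by simp [hf0]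
  rw [hg'0, sub_zero, sub_zero] at hη'
  rw [hg1, hg0] at hξ'
  norm_num at hξ'
  have hbound : |(D2 (x₀ + η • z)) z z| ≤ ‖D2 y₀‖ * ‖z‖ ^ 2 := by
    have hmem : x₀ + η • z ∈ closedBall x₀ 1 := by
      rw [mem_closedBall, dist_eq_norm]
      simp only [add_sub_cancel_left]
      rw [norm_smul]
      calc ‖η‖ * ‖z‖ ≤ 1 * 1 := by
            apply mul_le_mul _ hz (norm_nonneg z) zero_le_one
            rw [Real.norm_eq_abs, abs_le]
            constructor <;> [linarith [hη.1, hξ.2]; linarith [hη.2, hξ.2]]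
        _ = 1 := by ring
    calc |(D2 (x₀ + η • z)) z z| ≤ ‖D2 (x₀ + η • z)‖ * ‖z‖ * ‖z‖ :=
          (D2 (x₀ + η • z)).le_opNorm₂ z z
      _ ≤ ‖D2 y₀‖ * ‖z‖ * ‖z‖ := by
          gcongr
          exact hy₀ hmem
      _ = ‖D2 y₀‖ * ‖z‖ ^ 2 := by ring
  have hkey : u (x₀ + z) = ((D2 (x₀ + η • z)) z) z * ξ := by
    rw [← hξ', hη', div_mul_cancel₀ _ hξ.1.ne']
  nlinarith [le_abs_self (((D2 (x₀ + η • z)) z) z), abs_nonneg (((D2 (x₀ + η • z)) z) z),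
    hξ.1, hξ.2, hbound]

end Helpers

/-- Strict positivity of nontrivial nonnegative bounded classical solutions of
`-Δu + (-Δ)ˢu = λ h u^p + u^{2*-1}` in `ℝⁿ`. -/
theorem stmt18 (n : ℕ) (hn : 4 ≤ n) (s p lam : ℝ) (hs : s ∈ Ioo (0 : ℝ) 1)
    (hp : 1 ≤ p ∧ p < critExp n - 1) (hlam : 0 < lam)
    (h u : EuclideanSpace ℝ (Fin n) → ℝ)
    (hh_pos : ∀ x, 0 < h x) (hh_bdd : ∃ M, ∀ x, |h x| ≤ M) (hh_cont : Continuous h)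
    (hu_c2 : ContDiff ℝ 2 u) (hu_bdd : ∃ M, ∀ x, |u x| ≤ M) (hu_nonneg : ∀ x, 0 ≤ u x)
    (heq : ∀ x : EuclideanSpace ℝ (Fin n),
      -lap n u x + fracLap n s u x = lam * h x * u x ^ p + u x ^ (critExp n - 1))
    (hu_ne : ∃ x, u x ≠ 0) :
    ∀ x : EuclideanSpace ℝ (Fin n), 0 < u x := by
  intro x
  by_contra hx
  have hx0 : u x = 0 := le_antisymm (not_lt.mp hx) (hu_nonneg x)
  have hn4 : (4 : ℝ) ≤ (n : ℝ) := by exact_mod_cast hn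
  have hs0 := hs.1
  have hs1 := hs.2
  -- the right hand side vanishes at x
  have hp0 : p ≠ 0 := by intro hc; rw [hc] at hp; linarith [hp.1]
  have hc0 : critExp n - 1 ≠ 0 := by
    have : 1 < critExp n := by
      rw [critExp, lt_div_iff₀ (by linarith)]; linarith
    linarith
  have hEq0 : -lap n u x + fracLap n s u x = 0 := by
    rw [heq x, hx0, Real.zero_rpow hp0, Real.zero_rpow hc0]; ring
  -- the Laplacian is nonnegative at x
  have hlap : 0 ≤ lap n u x := by
    apply Finset.sum_nonneg
    intro i _
    set v : EuclideanSpace ℝ (Fin n) := EuclideanSpace.single i 1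
    have h2 : iteratedFDeriv ℝ 2 u x ![v, v] = fderiv ℝ (fderiv ℝ u) x v v := by
      rw [iteratedFDeriv_two_apply]
      simp
    rw [h2, ← my_deriv_line hu_c2 x v]
    apply my_secondDeriv_nonneg (my_contDiff_line hu_c2 x v)
    apply Filter.Eventually.of_forall
    intro t
    simp only []
    rw [show x + (0:ℝ) • v = x by simp, hx0]
    exact hu_nonneg _
  -- the integrand
  set q : ℝ := (n : ℝ) + 2 * s with hq
  set w : EuclideanSpace ℝ (Fin n) → ℝ :=
    fun z => (2 * u x - u (x + z) - u (x - z)) / ‖z‖ ^ q with hw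
  have hw_nonpos : ∀ z, w z ≤ 0 := by
    intro z
    apply div_nonpos_of_nonpos_of_nonneg
    · rw [hx0]; linarith [hu_nonneg (x + z), hu_nonneg (x - z)]
    · positivity
  have hI_nonpos : ∫ z, w z ≤ 0 := integral_nonpos hw_nonpos
  have hconst : 0 < fracLapConst n s := by
    rw [fracLapConst]
    apply div_pos
    · apply mul_pos (mul_pos (Real.rpow_pos_of_pos two_pos _) hs0)
      exact Real.Gamma_pos_of_pos (by positivity)
    · exact mul_pos (Real.rpow_pos_of_pos Real.pi_pos _)
        (Real.Gamma_pos_of_pos (by linarith))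
  have hfrac0 : fracLap n s u x = 0 := by
    have h1 : fracLap n s u x ≤ 0 := by
      rw [fracLap]
      apply mul_nonpos_of_nonneg_of_nonpos (by positivity) hI_nonpos
    linarith [hEq0, hlap]
  have hI0 : ∫ z, w z = 0 := by
    have := hfrac0
    rw [fracLap] at this
    rcases mul_eq_zero.mp this with hc | hI
    · exact absurd hc (by positivity)
    · exact hI
  -- measurability
  have hu_cont : Continuous u := hu_c2.continuous
  have hw_meas : Measurable w := by
    apply Measurable.div
    · exact ((continuous_const.sub (hu_cont.comp (continuous_const.add continuous_id))).sub
        (hu_cont.comp (continuous_const.sub continuous_id))).measurable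
    · exact measurable_norm.pow_const _
  -- integrability of w
  obtain ⟨C, hC0, hC⟩ := my_quad_bound hu_c2 x hx0 hu_nonneg
  obtain ⟨M, hM⟩ := hu_bdd
  have hM0 : 0 ≤ M := le_trans (abs_nonneg _) (hM x)
  have hq0 : 0 < q := by rw [hq]; positivity
  have hInt : Integrable w := by
    rw [← integrableOn_univ, ← Set.union_compl_self (ball (0:EuclideanSpace ℝ (Fin n)) 1)]
    apply IntegrableOn.union
    · -- on the unit ball
      set r : ℝ := q - 2 with hr
      have hr0 : 0 < r := by rw [hr, hq]; linarith
      have hrn : r < Module.finrank ℝ (EuclideanSpace ℝ (Fin n)) := by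
        rw [finrank_euclideanSpace_fin, hr, hq]; linarith
      apply Integrable.mono' ((my_integrableOn_norm_rpow_ball hr0 hrn).const_mul (2 * C))
      · exact hw_meas.aestronglyMeasurable.restrict
      · rw [ae_restrict_iff' measurableSet_ball]
        apply Filter.Eventually.of_forall
        intro z hz
        rw [mem_ball_zero_iff] at hz
        rcases eq_or_ne z 0 with rfl | hz0
        · simp [hw, Real.zero_rpow hq0.ne', Real.zero_rpow (by linarith : -r ≠ 0)]
        · have hzpos : 0 < ‖z‖ := norm_pos_iff.mpr hz0
          have hnum : |2 * u x - u (x + z) - u (x - z)| ≤ 2 * C * ‖z‖ ^ 2 := by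
            rw [hx0]
            have h1 : u (x + z) ≤ C * ‖z‖ ^ 2 := hC z hz.le
            have h2 : u (x - z) ≤ C * ‖z‖ ^ 2 := by
              have := hC (-z) (by rw [norm_neg]; exact hz.le)
              rwa [← sub_eq_add_neg, norm_neg] at this
            rw [abs_of_nonpos (by linarith [hu_nonneg (x + z), hu_nonneg (x - z)])]
            have := hu_nonneg (x + z); have := hu_nonneg (x - z)
            nlinarith
          have hden : ‖z‖ ^ q > 0 := Real.rpow_pos_of_pos hzpos _
          rw [Real.norm_eq_abs, hw]
          rw [abs_div, abs_of_pos hden, div_le_iff₀ hden]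
          calc |2 * u x - u (x + z) - u (x - z)| ≤ 2 * C * ‖z‖ ^ 2 := hnum
            _ = 2 * C * ‖z‖ ^ (-r) * ‖z‖ ^ q := by
                have hpow : ‖z‖ ^ (2:ℕ) = ‖z‖ ^ (-r) * ‖z‖ ^ q := by
                  rw [← Real.rpow_add hzpos, ← Real.rpow_natCast ‖z‖ 2]
                  congr 1
                  rw [hr]; push_cast; ring
                rw [show ‖z‖ ^ 2 = ‖z‖ ^ (2:ℕ) from rfl, hpow]; ring
    · -- off the unit ball
      apply Integrable.mono'
        (((integrable_one_add_norm (μ := (volume : Measure (EuclideanSpace ℝ (Fin n))))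
          (r := q) (by rw [finrank_euclideanSpace_fin, hq]; linarith)).const_mul
          (2 * M * 2 ^ q)).restrict)
      · exact hw_meas.aestronglyMeasurable.restrict
      · rw [ae_restrict_iff' measurableSet_ball.compl]
        apply Filter.Eventually.of_forall
        intro z hz
        simp only [mem_compl_iff, mem_ball_zero_iff, not_lt] at hz
        have hzpos : (0:ℝ) < ‖z‖ := lt_of_lt_of_le one_pos hz
        have hden : (0:ℝ) < ‖z‖ ^ q := Real.rpow_pos_of_pos hzpos _
        have hnum : |2 * u x - u (x + z) - u (x - z)| ≤ 2 * M := by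
          rw [hx0]
          have := hM (x + z); have := hM (x - z)
          have h1 := abs_le.mp (hM (x + z)); have h2 := abs_le.mp (hM (x - z))
          rw [abs_le]; constructor <;> [linarith; linarith]
        rw [Real.norm_eq_abs, hw, abs_div, abs_of_pos hden]
        have hkey : (1 + ‖z‖) ^ q ≤ 2 ^ q * ‖z‖ ^ q := by
          rw [← Real.mul_rpow two_pos.le (norm_nonneg z)]
          apply Real.rpow_le_rpow (by positivity) (by linarith) hq0.le
        have h2q : (0:ℝ) < (2:ℝ) ^ q := Real.rpow_pos_of_pos two_pos _
        have h1z : (0:ℝ) < (1 + ‖z‖) ^ q := Real.rpow_pos_of_pos (by linarith) _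
        rw [div_le_iff₀ hden]
        calc |2 * u x - u (x + z) - u (x - z)| ≤ 2 * M := hnum
          _ = 2 * M * 2 ^ q * ((1 + ‖z‖) ^ (-q) * (1 + ‖z‖) ^ q) / 2 ^ q := by
              have hone : (1 + ‖z‖) ^ (-q) * (1 + ‖z‖) ^ q = 1 := by
                rw [← Real.rpow_add (by linarith)]; simp
              rw [hone]; field_simp
          _ ≤ 2 * M * 2 ^ q * ((1 + ‖z‖) ^ (-q) * (2 ^ q * ‖z‖ ^ q)) / 2 ^ q := by
              gcongr
          _ = 2 * M * 2 ^ q * (1 + ‖z‖) ^ (-q) * ‖z‖ ^ q := by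
              field_simp
  -- conclude w = 0 a.e.
  have hae : ∀ᵐ z : EuclideanSpace ℝ (Fin n), w z = 0 := by
    have hneg : (0:EuclideanSpace ℝ (Fin n) → ℝ) ≤ fun z => -w z :=
      fun z => by simpa using hw_nonpos z
    have hintneg : Integrable (fun z => -w z) := hInt.neg
    have h0 : ∫ z, -w z = 0 := by rw [integral_neg, hI0, neg_zero]
    have := (integral_eq_zero_iff_of_nonneg hneg hintneg).mp h0
    filter_upwards [this] with z hz
    simpa using hz
  -- derive u ≡ 0 near any point, contradiction
  obtain ⟨y, hy⟩ := hu_ne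
  have hy_pos : 0 < u y := lt_of_le_of_ne (hu_nonneg y) (Ne.symm hy)
  set z₀ : EuclideanSpace ℝ (Fin n) := y - x with hz₀
  have hz₀ne : z₀ ≠ 0 := by
    intro hc
    rw [hz₀, sub_eq_zero] at hc
    rw [hc, hx0] at hy_pos
    exact lt_irrefl _ hy_pos
  have hVopen : IsOpen {z : EuclideanSpace ℝ (Fin n) | 0 < u (x + z)} :=
    isOpen_lt continuous_const (hu_cont.comp (continuous_const.add continuous_id))
  have hz₀mem : z₀ ∈ {z : EuclideanSpace ℝ (Fin n) | 0 < u (x + z)} := by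
    simp only [mem_setOf_eq, hz₀, add_sub_cancel]
    exact hy_pos
  obtain ⟨ρ, hρ, hball⟩ := Metric.isOpen_iff.mp (hVopen.inter isOpen_compl_singleton) z₀ ⟨hz₀mem, by simpa using hz₀ne⟩
  have hsub : ball z₀ ρ ⊆ {z : EuclideanSpace ℝ (Fin n) | w z ≠ 0} := by
    intro z hz
    obtain ⟨hz1, hz2⟩ := hball hz
    simp only [mem_setOf_eq] at hz1 ⊢
    have hzne : z ≠ 0 := hz2
    have hzpos : 0 < ‖z‖ := norm_pos_iff.mpr hzne
    have hden : (0:ℝ) < ‖z‖ ^ q := Real.rpow_pos_of_pos hzpos _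
    have hnum : 2 * u x - u (x + z) - u (x - z) < 0 := by
      rw [hx0]; linarith [hu_nonneg (x - z)]
    exact ne_of_lt (div_neg_of_neg_of_pos hnum hden)
  have hnull : volume {z : EuclideanSpace ℝ (Fin n) | w z ≠ 0} = 0 := by
    rw [← compl_setOf]
    exact hae
  have := measure_mono_null hsub hnull
  exact absurd this (measure_ball_pos volume z₀ hρ).ne'
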